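/- For 0 < λ < 1, the limit as α → 0⁺ of the MLFD(λ, α, β) pmf at each k is the geometric pmf (1−λ)λ^k. -/

import Mathlib

open Real Filter Topology

noncomputable def mittagLeffler (α β z : ℝ) : ℝ :=
  ∑' k : ℕ, z ^ k / Real.Gamma (α * k + β)

/-- The pmf of the Mittag-Leffler function distribution MLFD(λ, α, β). -/
noncomputable def mlfdPmf (lam α β : ℝ) (k : ℕ) : ℝ :=
  lam ^ k / (Real.Gamma (α * k + β) * mittagLeffler α β lam)

/-- Γ is bounded below by a positive constant on `[β, ∞)`. -/
lemma gamma_lower_bound {β : ℝ} (hβ : 0 < β) :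
    ∃ c > 0, ∀ x, β ≤ x → c ≤ Real.Gamma x := by
  set B := max β 2 with hB
  have hcont : ContinuousOn Real.Gamma (Set.Icc β B) := fun x hx =>
    ((Real.differentiableAt_Gamma (fun m => by
      have : 0 < x := lt_of_lt_of_le hβ hx.1
      intro h; rw [h] at this
      exact ((neg_nonpos.mpr (Nat.cast_nonneg m) : -(m:ℝ) ≤ 0).not_gt this))).continuousAt).continuousWithinAt
  obtain ⟨x₀, hx₀, hmin⟩ := (isCompact_Icc (a := β) (b := B)).exists_isMinOn
    ⟨β, le_refl β, le_max_left _ _⟩ hcont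
  refine ⟨min (Real.Gamma x₀) 1, lt_min (Real.Gamma_pos_of_pos (lt_of_lt_of_le hβ hx₀.1))
    one_pos, fun x hx => ?_⟩
  rcases le_or_gt x B with h | h
  · exact le_trans (min_le_left _ _) (hmin ⟨hx, h⟩)
  · refine le_trans (min_le_right _ _) ?_
    rw [← Real.Gamma_two]
    exact Real.Gamma_strictMonoOn_Ici.monotoneOn (Set.mem_Ici.2 le_rfl)
      (Set.mem_Ici.2 (le_trans (le_max_right β 2) h.le))
      (le_trans (le_max_right β 2) h.le)

lemma gamma_continuousAt {x : ℝ} (hx : 0 < x) : ContinuousAt Real.Gamma x :=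
  (Real.differentiableAt_Gamma (fun m => by intro h; rw [h] at hx; exact (neg_nonpos.mpr (Nat.cast_nonneg m) : -(m:ℝ) ≤ 0).not_gt hx)).continuousAt

lemma mittagLeffler_tendsto (lam β : ℝ) (hlam0 : 0 < lam) (hlam1 : lam < 1) (hβ : 0 < β) :
    Tendsto (fun α : ℝ => mittagLeffler α β lam) (nhdsWithin 0 (Set.Ioi 0))
      (nhds ((1 - lam)⁻¹ / Real.Gamma β)) := by
  obtain ⟨c, hc, hcle⟩ := gamma_lower_bound hβ
  have hsum : Summable (fun j : ℕ => lam ^ j / c) :=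
    (summable_geometric_of_lt_one hlam0.le hlam1).div_const c
  have hpt : ∀ j : ℕ, Tendsto (fun α : ℝ => lam ^ j / Real.Gamma (α * j + β))
      (nhdsWithin 0 (Set.Ioi 0)) (nhds (lam ^ j / Real.Gamma β)) := by
    intro j
    have h1 : Tendsto (fun α : ℝ => α * j + β) (nhdsWithin 0 (Set.Ioi 0)) (nhds β) := by
      have : Tendsto (fun α : ℝ => α * j + β) (nhds 0) (nhds (0 * j + β)) := by
        exact (tendsto_id.mul_const _).add_const β
      rw [zero_mul, zero_add] at this
      exact this.mono_left nhdsWithin_le_nhds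
    exact tendsto_const_nhds.div ((gamma_continuousAt hβ).tendsto.comp h1)
      (Real.Gamma_pos_of_pos hβ).ne'
  have hbd : ∀ᶠ α in nhdsWithin (0:ℝ) (Set.Ioi 0),
      ∀ j : ℕ, ‖lam ^ j / Real.Gamma (α * j + β)‖ ≤ lam ^ j / c := by
    filter_upwards [self_mem_nhdsWithin] with α (hα : 0 < α) j
    have hge : c ≤ Real.Gamma (α * j + β) := hcle _ (le_add_of_nonneg_left (by positivity))
    rw [Real.norm_eq_abs, abs_div, abs_of_nonneg (by positivity),
      abs_of_pos (lt_of_lt_of_le hc hge)]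
    exact div_le_div_of_nonneg_left (by positivity) hc hge
  have := tendsto_tsum_of_dominated_convergence hsum hpt hbd
  have heq : (∑' j : ℕ, lam ^ j / Real.Gamma β) = (1 - lam)⁻¹ / Real.Gamma β := by
    rw [tsum_div_const, tsum_geometric_of_lt_one hlam0.le hlam1]
  rw [heq] at this
  exact this

/-- As `α → 0⁺`, the MLFD pmf tends to the geometric pmf `(1−λ)λ^k`. -/
theorem mlfd_tendsto_geometric (lam β : ℝ) (hlam0 : 0 < lam) (hlam1 : lam < 1)
    (hβ : 0 < β) (k : ℕ) :
    Tendsto (fun α : ℝ => mlfdPmf lam α β k) (nhdsWithin 0 (Set.Ioi 0))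
      (nhds ((1 - lam) * lam ^ k)) := by
  have hE := mittagLeffler_tendsto lam β hlam0 hlam1 hβ
  have hΓ : Tendsto (fun α : ℝ => Real.Gamma (α * k + β)) (nhdsWithin 0 (Set.Ioi 0))
      (nhds (Real.Gamma β)) := by
    have h1 : Tendsto (fun α : ℝ => α * k + β) (nhdsWithin 0 (Set.Ioi 0)) (nhds β) := by
      have : Tendsto (fun α : ℝ => α * k + β) (nhds 0) (nhds (0 * k + β)) :=
        (tendsto_id.mul_const _).add_const β
      rw [zero_mul, zero_add] at this
      exact this.mono_left nhdsWithin_le_nhds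
    exact (gamma_continuousAt hβ).tendsto.comp h1
  have hden : Tendsto (fun α : ℝ => Real.Gamma (α * k + β) * mittagLeffler α β lam)
      (nhdsWithin 0 (Set.Ioi 0)) (nhds (Real.Gamma β * ((1 - lam)⁻¹ / Real.Gamma β))) :=
    hΓ.mul hE
  have hΓβ : Real.Gamma β ≠ 0 := (Real.Gamma_pos_of_pos hβ).ne'
  have h1lam : (1 : ℝ) - lam ≠ 0 := by linarith
  have hval : Real.Gamma β * ((1 - lam)⁻¹ / Real.Gamma β) = (1 - lam)⁻¹ := by
    field_simp
  rw [hval] at hden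
  have := (tendsto_const_nhds (x := lam ^ k)).div hden (inv_ne_zero h1lam)
  have hval2 : lam ^ k / (1 - lam)⁻¹ = (1 - lam) * lam ^ k := by
    field_simp
  rw [hval2] at this
  exact this
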